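/- Let K and r be integers with 2 ≤ r < K, and set q = 1/(C(K,r)·(K−r)·(r−1)) and λ = r/K as real numbers. Then the sequence F ↦ r·(F·q + √(2·F·q·(1−q)·log(r−1)))·C(K−1, K−r−1)/(λ·F), indexed by natural numbers F, tends to 1/(r−1) as F → ∞ (Filter.Tendsto along Filter.atTop to the neighborhood of 1/(r−1)). -/

import Mathlib

/-- For `2 ≤ r < K`, with `q = 1/(C(K,r)·(K−r)·(r−1))` and `λ = r/K`,
the sequence `F ↦ r·(F·q + √(2·F·q·(1−q)·log(r−1)))·C(K−1, K−r−1)/(λ·F)` tends to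
`1/(r−1)` as `F → ∞`. -/
theorem stmt6 (K r : ℕ) (hr : 2 ≤ r) (hrK : r < K) :
    Filter.Tendsto
      (fun F : ℕ =>
        (r : ℝ) *
            ((F : ℝ) * (1 / ((Nat.choose K r : ℝ) * ((K : ℝ) - r) * ((r : ℝ) - 1)))
              + Real.sqrt (2 * (F : ℝ)
                  * (1 / ((Nat.choose K r : ℝ) * ((K : ℝ) - r) * ((r : ℝ) - 1)))
                  * (1 - 1 / ((Nat.choose K r : ℝ) * ((K : ℝ) - r) * ((r : ℝ) - 1)))
                  * Real.log ((r : ℝ) - 1)))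
          * (Nat.choose (K - 1) (K - r - 1) : ℝ) / (((r : ℝ) / K) * F))
      Filter.atTop (nhds (1 / ((r : ℝ) - 1))) := by
  set Q : ℝ := 1 / ((Nat.choose K r : ℝ) * ((K : ℝ) - r) * ((r : ℝ) - 1)) with hQ
  set c : ℝ := (Nat.choose (K - 1) (K - r - 1) : ℝ) with hc
  set S : ℝ := Real.sqrt (2 * Q * (1 - Q) * Real.log ((r : ℝ) - 1)) with hS
  -- basic nonvanishing facts
  have hK0 : (0:ℝ) < K := by exact_mod_cast (by omega : 0 < K)
  have hr0 : (0:ℝ) < r := by positivity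
  have hr1 : (0:ℝ) < (r:ℝ) - 1 := by
    have : (2:ℝ) ≤ r := by exact_mod_cast hr
    linarith
  have hKr : (0:ℝ) < (K:ℝ) - r := by
    have : (r:ℝ) < K := by exact_mod_cast hrK
    linarith
  have hch : (0:ℝ) < (Nat.choose K r : ℝ) := by
    exact_mod_cast Nat.choose_pos hrK.le
  -- the combinatorial identity
  have hnat : K * Nat.choose (K - 1) (K - r - 1) = Nat.choose K r * (K - r) := by
    have h := Nat.add_one_mul_choose_eq (K - 1) (K - r - 1)
    have h1 : K - 1 + 1 = K := by omega
    have h2 : K - r - 1 + 1 = K - r := by omega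
    simp only [Nat.succ_eq_add_one, h1, h2] at h
    rw [h, Nat.choose_symm hrK.le]
  have hkey : (K:ℝ) * c * Q = 1 / ((r:ℝ) - 1) := by
    have hcast : (K:ℝ) * c = (Nat.choose K r : ℝ) * ((K:ℝ) - r) := by
      have := congrArg (fun n : ℕ => (n : ℝ)) hnat
      push_cast [Nat.cast_sub hrK.le] at this
      simpa [hc] using this
    rw [hQ, hcast]
    field_simp
  -- eventual equality with a simpler function
  have heq : ∀ᶠ F : ℕ in Filter.atTop,
      (r : ℝ) * ((F : ℝ) * Q
          + Real.sqrt (2 * (F : ℝ) * Q * (1 - Q) * Real.log ((r : ℝ) - 1)))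
        * c / (((r : ℝ) / K) * F)
      = 1 / ((r:ℝ) - 1) + ((K:ℝ) * c * S) * (Real.sqrt F)⁻¹ := by
    filter_upwards [Filter.eventually_ge_atTop 1] with F hF
    have hF0 : (0:ℝ) < F := by exact_mod_cast hF
    have hx : (0:ℝ) < Real.sqrt F := Real.sqrt_pos.mpr hF0
    have hx2 : Real.sqrt F * Real.sqrt F = (F:ℝ) := Real.mul_self_sqrt hF0.le
    have hsplit : Real.sqrt (2 * (F : ℝ) * Q * (1 - Q) * Real.log ((r : ℝ) - 1))
        = Real.sqrt F * S := by
      rw [hS, ← Real.sqrt_mul (Nat.cast_nonneg F)]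
      ring_nf
    rw [hsplit, ← hkey]
    field_simp
    linear_combination (S * c) * hx2
  refine Filter.Tendsto.congr' (heq.mono fun F h => h.symm) ?_
  have hs : Filter.Tendsto Real.sqrt Filter.atTop Filter.atTop := by
    apply Filter.tendsto_atTop_atTop.mpr
    intro b
    refine ⟨b ^ 2, fun a ha => ?_⟩
    calc b ≤ |b| := le_abs_self b
      _ = Real.sqrt (b ^ 2) := (Real.sqrt_sq_eq_abs b).symm
      _ ≤ Real.sqrt a := Real.sqrt_le_sqrt ha
  have h0 : Filter.Tendsto (fun F : ℕ => (Real.sqrt F)⁻¹) Filter.atTop (nhds 0) :=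
    Filter.Tendsto.comp tendsto_inv_atTop_zero
      (hs.comp tendsto_natCast_atTop_atTop)
  have h1 := Filter.Tendsto.add (tendsto_const_nhds (x := 1 / ((r:ℝ) - 1)))
    (h0.const_mul ((K:ℝ) * c * S))
  simpa using h1
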